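/- Let U ⊆ ℝ³ be open and let Φ, Φ̃ : U → Matrix (Fin 2) (Fin 2) ℝ be C² maps such that at every point Φ and Φ̃ are symmetric, positive definite, and det Φ = det Φ̃ = 1, and suppose both satisfy the harmonic map equation Σ_{k=1}^{3} ∂_k(Φ⁻¹ ∂_k Φ) = 0 and Σ_{k=1}^{3} ∂_k(Φ̃⁻¹ ∂_k Φ̃) = 0 on U. Then the function Ψ := trace(Φ̃ · Φ⁻¹) satisfies ΔΨ := Σ_{k=1}^{3} ∂²Ψ/∂x_k² ≥ 0 on U. -/

import Mathlib

open Matrix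

/-- Directional partial derivative ∂_k of a scalar function on ℝ³. -/
noncomputable def pd3 (k : Fin 3) (f : (Fin 3 → ℝ) → ℝ) (x : Fin 3 → ℝ) : ℝ :=
  fderiv ℝ f x (Pi.single k 1)

/-- Entrywise directional partial derivative ∂_k of a matrix-valued function on ℝ³. -/
noncomputable def mpd3 (k : Fin 3) (F : (Fin 3 → ℝ) → Matrix (Fin 2) (Fin 2) ℝ)
    (x : Fin 3 → ℝ) : Matrix (Fin 2) (Fin 2) ℝ :=
  Matrix.of fun i j => fderiv ℝ (fun y => F y i j) x (Pi.single k 1)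

theorem pd3_congr {f g : (Fin 3 → ℝ) → ℝ} {x : Fin 3 → ℝ}
    (h : f =ᶠ[nhds x] g) (k : Fin 3) : pd3 k f x = pd3 k g x := by
  simp only [pd3, h.fderiv_eq]

theorem mpd3_apply (k : Fin 3) (F : (Fin 3 → ℝ) → Matrix (Fin 2) (Fin 2) ℝ)
    (x : Fin 3 → ℝ) (i j : Fin 2) :
    mpd3 k F x i j = pd3 k (fun y => F y i j) x := rfl

theorem mpd3_congr {F G : (Fin 3 → ℝ) → Matrix (Fin 2) (Fin 2) ℝ} {x : Fin 3 → ℝ}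
    (h : ∀ᶠ y in nhds x, F y = G y) (k : Fin 3) : mpd3 k F x = mpd3 k G x := by
  ext i j
  simp only [mpd3, Matrix.of_apply]
  rw [Filter.EventuallyEq.fderiv_eq (h.mono fun y hy => by rw [hy])]

theorem pd3_add {f g : (Fin 3 → ℝ) → ℝ} {x : Fin 3 → ℝ}
    (hf : DifferentiableAt ℝ f x) (hg : DifferentiableAt ℝ g x) (k : Fin 3) :
    pd3 k (fun y => f y + g y) x = pd3 k f x + pd3 k g x := by
  simp only [pd3, fderiv_fun_add hf hg, ContinuousLinearMap.add_apply]

theorem pd3_sub {f g : (Fin 3 → ℝ) → ℝ} {x : Fin 3 → ℝ}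
    (hf : DifferentiableAt ℝ f x) (hg : DifferentiableAt ℝ g x) (k : Fin 3) :
    pd3 k (fun y => f y - g y) x = pd3 k f x - pd3 k g x := by
  simp only [pd3, fderiv_fun_sub hf hg, ContinuousLinearMap.sub_apply]

theorem pd3_mul {f g : (Fin 3 → ℝ) → ℝ} {x : Fin 3 → ℝ}
    (hf : DifferentiableAt ℝ f x) (hg : DifferentiableAt ℝ g x) (k : Fin 3) :
    pd3 k (fun y => f y * g y) x = pd3 k f x * g x + f x * pd3 k g x := by
  simp only [pd3, fderiv_fun_mul hf hg, ContinuousLinearMap.add_apply,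
    ContinuousLinearMap.smul_apply, smul_eq_mul]
  ring

theorem pd3_neg {f : (Fin 3 → ℝ) → ℝ} {x : Fin 3 → ℝ} (k : Fin 3) :
    pd3 k (fun y => -(f y)) x = -(pd3 k f x) := by
  simp only [pd3, fderiv_fun_neg, ContinuousLinearMap.neg_apply]

theorem qf_nonneg (p q r u v : ℝ) (hp : 0 < p) (hP : p*r - q^2 = 1) :
    0 ≤ r*u^2 - 2*q*u*v + p*v^2 := by
  have e1 : p*(r*u^2 - 2*q*u*v + p*v^2) = (p*v - q*u)^2 + u^2 := by
    linear_combination (u^2)*hP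
  nlinarith [sq_nonneg (p*v - q*u), sq_nonneg u]

theorem qf_det (p q r u v w z : ℝ) (hP : p*r - q^2 = 1) :
    (r*u*w - q*(u*z + v*w) + p*v*z)^2 ≤ (r*u^2 - 2*q*u*v + p*v^2)*(r*w^2 - 2*q*w*z + p*z^2) := by
  have e1 : (r*u^2 - 2*q*u*v + p*v^2)*(r*w^2 - 2*q*w*z + p*z^2)
      - (r*u*w - q*(u*z + v*w) + p*v*z)^2 = (u*z - v*w)^2 := by
    linear_combination ((u*z - v*w)^2)*hP
  nlinarith [sq_nonneg (u*z - v*w)]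

theorem psd_step (a b c m00 m01 m11 : ℝ) (ha : 0 < a)
    (hPt : a*c - b^2 = 1) (hm00 : 0 ≤ m00) (hm11 : 0 ≤ m11)
    (hdet : m01^2 ≤ m00*m11) : 0 ≤ a*m00 + 2*b*m01 + c*m11 := by
  have hc : 0 < c := by nlinarith [sq_nonneg b]
  have h3 : (a*c - b^2)*m01^2 = m01^2 := by rw [hPt]; ring
  have key2 : 4*m01^2 ≤ (a*m00 + 2*b*m01 + c*m11)*(a*m00 - 2*b*m01 + c*m11) := by
    nlinarith [mul_nonneg (mul_nonneg ha.le hc.le) (sub_nonneg.mpr hdet),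
      sq_nonneg (a*m00 - c*m11), h3]
  by_contra hcon
  push_neg at hcon
  have hA : 0 ≤ a*m00 + c*m11 := add_nonneg (mul_nonneg ha.le hm00) (mul_nonneg hc.le hm11)
  have h1 : 0 < a*m00 - 2*b*m01 + c*m11 := by linarith
  nlinarith [mul_pos h1 (by linarith : (0:ℝ) < -(a*m00 + 2*b*m01 + c*m11)), key2, sq_nonneg m01]

set_option maxHeartbeats 1000000 in
theorem mazur_scalar (p q r a b c d e f g h i : ℝ)
    (hp : 0 < p) (ha : 0 < a)
    (hP : p*r - q^2 = 1) (hPt : a*c - b^2 = 1)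
    (hD : r*d - 2*q*e + p*f = 0) (hDt : c*g - 2*b*h + a*i = 0) :
    0 ≤ 2*f*g - 4*e*h + 2*d*i + r*a*h^2 - r*a*g*i + r*a*e^2 - r*a*d*f
      - 2*q*b*h^2 + 2*q*b*g*i - 2*q*b*e^2 + 2*q*b*d*f
      + p*c*h^2 - p*c*g*i + p*c*e^2 - p*c*d*f := by
  have hm00 : 0 ≤ (r*((c*g - b*h) - (r*d - q*e))^2 - 2*q*((c*g - b*h) - (r*d - q*e))*((c*h - b*i) - (r*e - q*f)) + p*((c*h - b*i) - (r*e - q*f))^2) := qf_nonneg p q r ((c*g - b*h) - (r*d - q*e)) ((c*h - b*i) - (r*e - q*f)) hp hP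
  have hm11 : 0 ≤ (r*((a*h - b*g) - (p*e - q*d))^2 - 2*q*((a*h - b*g) - (p*e - q*d))*((a*i - b*h) - (p*f - q*e)) + p*((a*i - b*h) - (p*f - q*e))^2) := qf_nonneg p q r ((a*h - b*g) - (p*e - q*d)) ((a*i - b*h) - (p*f - q*e)) hp hP
  have hdet : (r*((c*g - b*h) - (r*d - q*e))*((a*h - b*g) - (p*e - q*d)) - q*(((c*g - b*h) - (r*d - q*e))*((a*i - b*h) - (p*f - q*e)) + ((c*h - b*i) - (r*e - q*f))*((a*h - b*g) - (p*e - q*d))) + p*((c*h - b*i) - (r*e - q*f))*((a*i - b*h) - (p*f - q*e)))^2 ≤ (r*((c*g - b*h) - (r*d - q*e))^2 - 2*q*((c*g - b*h) - (r*d - q*e))*((c*h - b*i) - (r*e - q*f)) + p*((c*h - b*i) - (r*e - q*f))^2)*(r*((a*h - b*g) - (p*e - q*d))^2 - 2*q*((a*h - b*g) - (p*e - q*d))*((a*i - b*h) - (p*f - q*e)) + p*((a*i - b*h) - (p*f - q*e))^2) := qf_det p q r ((c*g - b*h) - (r*d - q*e)) ((c*h - b*i) - (r*e - q*f)) ((a*h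 - b*g) - (p*e - q*d)) ((a*i - b*h) - (p*f - q*e)) hP
  have hT : 0 ≤ a*(r*((c*g - b*h) - (r*d - q*e))^2 - 2*q*((c*g - b*h) - (r*d - q*e))*((c*h - b*i) - (r*e - q*f)) + p*((c*h - b*i) - (r*e - q*f))^2) + 2*b*(r*((c*g - b*h) - (r*d - q*e))*((a*h - b*g) - (p*e - q*d)) - q*(((c*g - b*h) - (r*d - q*e))*((a*i - b*h) - (p*f - q*e)) + ((c*h - b*i) - (r*e - q*f))*((a*h - b*g) - (p*e - q*d))) + p*((c*h - b*i) - (r*e - q*f))*((a*i - b*h) - (p*f - q*e))) + c*(r*((a*h - b*g) - (p*e - q*d))^2 - 2*q*((a*h - b*g) - (p*e - q*d))*((a*i - b*h) - (p*f - q*e)) + p*((a*i - b*h) - (p*f - q*e))^2) := psd_step a b c _ _ _ ha hPt hm00 hm11 hdet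
  have key : (2*f*g - 4*e*h + 2*d*i + r*a*h^2 - r*a*g*i + r*a*e^2 - r*a*d*f - 2*q*b*h^2 + 2*q*b*g*i - 2*q*b*e^2 + 2*q*b*d*f + p*c*h^2 - p*c*g*i + p*c*e^2 - p*c*d*f)
      = a*(r*((c*g - b*h) - (r*d - q*e))^2 - 2*q*((c*g - b*h) - (r*d - q*e))*((c*h - b*i) - (r*e - q*f)) + p*((c*h - b*i) - (r*e - q*f))^2) + 2*b*(r*((c*g - b*h) - (r*d - q*e))*((a*h - b*g) - (p*e - q*d)) - q*(((c*g - b*h) - (r*d - q*e))*((a*i - b*h) - (p*f - q*e)) + ((c*h - b*i) - (r*e - q*f))*((a*h - b*g) - (p*e - q*d))) + p*((c*h - b*i) - (r*e - q*f))*((a*i - b*h) - (p*f - q*e))) + c*(r*((a*h - b*g) - (p*e - q*d))^2 - 2*q*((a*h - b*g) - (p*e - q*d))*((a*i - b*h) - (p*f - q*e)) + p*((a*i - b*h) - (p*f - q*e))^2) := by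
    linear_combination ((2)*b^2*f*g + (-4)*b^2*e*h + (2)*b^2*d*i + (-2)*a*c*f*g + (4)*a*c*e*h + (-2)*a*c*d*i + (-1)*r*a*e^2 + (1)*r*a*d*f + (2)*q*b*e^2 + (-2)*q*b*d*f + (-1)*p*c*e^2 + (1)*p*c*d*f)*hP + ((-2)*f*g + (4)*e*h + (-2)*d*i + (-1)*r*a*h^2 + (1)*r*a*g*i + (2)*q*b*h^2 + (-2)*q*b*g*i + (-1)*p*c*h^2 + (1)*p*c*g*i)*hPt + ((-2)*r*b^2*g + (2)*r*a*c*g + (-1)*r^2*a*d + (4)*q*b^2*h + (-4)*q*a*c*h + (2)*q*r*b*d + (2)*q*r*a*e + (-1)*q^2*c*d + (-2)*q^2*b*e + (-1)*q^2*a*f + (-2)*p*b^2*i + (2)*p*a*c*i + (-2)*p*r*b*e + (2)*p*q*c*e + (2)*p*q*b*f + (-1)*p^2*c*f)*hD + ((1)*r*b^2*g + (-1)*r*a*c*g + (-2)*q*b^2*h + (2)*q*a*c*h + (1)*p*b^2*i + (-1)*p*a*c*i)*hDt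
  linarith [hT, key.ge]

theorem mpd3_mul {F G : (Fin 3 → ℝ) → Matrix (Fin 2) (Fin 2) ℝ} {x : Fin 3 → ℝ}
    (hF : ∀ i j, DifferentiableAt ℝ (fun y => F y i j) x)
    (hG : ∀ i j, DifferentiableAt ℝ (fun y => G y i j) x) (k : Fin 3) :
    mpd3 k (fun y => F y * G y) x = mpd3 k F x * G x + F x * mpd3 k G x := by
  ext i j
  have h1 : (fun y => (F y * G y) i j) = fun y => F y i 0 * G y 0 j + F y i 1 * G y 1 j := by
    funext y; simp [Matrix.mul_apply, Fin.sum_univ_two]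
  rw [show (mpd3 k (fun y => F y * G y) x) i j = pd3 k (fun y => (F y * G y) i j) x from rfl,
    h1, pd3_add ((hF i 0).fun_mul (hG 0 j)) ((hF i 1).fun_mul (hG 1 j)),
    pd3_mul (hF i 0) (hG 0 j), pd3_mul (hF i 1) (hG 1 j)]
  simp [Matrix.mul_apply, Fin.sum_univ_two, mpd3_apply, Matrix.add_apply]
  ring

theorem pd3_trace {H : (Fin 3 → ℝ) → Matrix (Fin 2) (Fin 2) ℝ} {x : Fin 3 → ℝ}
    (hH : ∀ i j, DifferentiableAt ℝ (fun y => H y i j) x) (k : Fin 3) :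
    pd3 k (fun y => (H y).trace) x = (mpd3 k H x).trace := by
  have h1 : (fun y => (H y).trace) = fun y => H y 0 0 + H y 1 1 := by
    funext y; simp [Matrix.trace_fin_two]
  rw [h1, pd3_add (hH 0 0) (hH 1 1)]
  simp [Matrix.trace_fin_two, mpd3_apply]

theorem adj00 (A : Matrix (Fin 2) (Fin 2) ℝ) : A.adjugate 0 0 = A 1 1 := by
  simp [Matrix.adjugate_fin_two]
theorem adj01 (A : Matrix (Fin 2) (Fin 2) ℝ) : A.adjugate 0 1 = -A 0 1 := by
  simp [Matrix.adjugate_fin_two]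
theorem adj10 (A : Matrix (Fin 2) (Fin 2) ℝ) : A.adjugate 1 0 = -A 1 0 := by
  simp [Matrix.adjugate_fin_two]
theorem adj11 (A : Matrix (Fin 2) (Fin 2) ℝ) : A.adjugate 1 1 = A 0 0 := by
  simp [Matrix.adjugate_fin_two]

theorem mpd3_adjugate {F : (Fin 3 → ℝ) → Matrix (Fin 2) (Fin 2) ℝ} {x : Fin 3 → ℝ} (k : Fin 3) :
    mpd3 k (fun y => (F y).adjugate) x = (mpd3 k F x).adjugate := by
  ext i j
  fin_cases i <;> fin_cases j <;>
    simp only [Fin.zero_eta, Fin.mk_one, Fin.isValue, mpd3_apply, adj00, adj01, adj10, adj11,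
      pd3_neg]

theorem adjugate_add' (A B : Matrix (Fin 2) (Fin 2) ℝ) :
    (A + B).adjugate = A.adjugate + B.adjugate := by
  ext i j
  fin_cases i <;> fin_cases j <;>
    simp [Fin.zero_eta, Fin.mk_one, adj00, adj01, adj10, adj11, Matrix.add_apply] <;> ring

theorem adjugate_neg' (A : Matrix (Fin 2) (Fin 2) ℝ) :
    (-A).adjugate = -A.adjugate := by
  ext i j
  fin_cases i <;> fin_cases j <;>
    simp [Fin.zero_eta, Fin.mk_one, adj00, adj01, adj10, adj11, Matrix.neg_apply]


theorem mazur_key (P Pt D Dt : Matrix (Fin 2) (Fin 2) ℝ)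
    (hPs : Pᵀ = P) (hPts : Ptᵀ = Pt) (hDs : Dᵀ = D) (hDts : Dtᵀ = Dt)
    (hp : 0 < P 0 0) (ha : 0 < Pt 0 0)
    (hPdet : P.det = 1) (hPtdet : Pt.det = 1)
    (htD : (P.adjugate * D).trace = 0) (htDt : (Pt.adjugate * Dt).trace = 0) :
    0 ≤ -(Pt * (Dt.adjugate * Dt) * P.adjugate).trace + 2*(Dt * D.adjugate).trace
      - (Pt * (D.adjugate * D).adjugate * P.adjugate).trace := by
  have hq : P 1 0 = P 0 1 := by
    have := congrFun (congrFun hPs 0) 1; simpa [Matrix.transpose_apply] using this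
  have hb : Pt 1 0 = Pt 0 1 := by
    have := congrFun (congrFun hPts 0) 1; simpa [Matrix.transpose_apply] using this
  have he : D 1 0 = D 0 1 := by
    have := congrFun (congrFun hDs 0) 1; simpa [Matrix.transpose_apply] using this
  have hh : Dt 1 0 = Dt 0 1 := by
    have := congrFun (congrFun hDts 0) 1; simpa [Matrix.transpose_apply] using this
  have hP' : P 0 0 * P 1 1 - (P 0 1)^2 = 1 := by
    rw [Matrix.det_fin_two, hq] at hPdet; linear_combination hPdet
  have hPt' : Pt 0 0 * Pt 1 1 - (Pt 0 1)^2 = 1 := by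
    rw [Matrix.det_fin_two, hb] at hPtdet; linear_combination hPtdet
  have htD' : P 1 1 * D 0 0 - 2 * (P 0 1) * (D 0 1) + P 0 0 * D 1 1 = 0 := by
    simp only [Matrix.trace_fin_two, Matrix.mul_apply, Fin.sum_univ_two,
      adj00, adj01, adj10, adj11] at htD
    rw [hq, he] at htD; linear_combination htD
  have htDt' : Pt 1 1 * Dt 0 0 - 2 * (Pt 0 1) * (Dt 0 1) + Pt 0 0 * Dt 1 1 = 0 := by
    simp only [Matrix.trace_fin_two, Matrix.mul_apply, Fin.sum_univ_two,
      adj00, adj01, adj10, adj11] at htDt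
    rw [hb, hh] at htDt; linear_combination htDt
  have key := mazur_scalar (P 0 0) (P 0 1) (P 1 1) (Pt 0 0) (Pt 0 1) (Pt 1 1)
    (D 0 0) (D 0 1) (D 1 1) (Dt 0 0) (Dt 0 1) (Dt 1 1) hp ha hP' hPt' htD' htDt'
  simp only [Matrix.trace_fin_two, Matrix.mul_apply, Fin.sum_univ_two,
    adj00, adj01, adj10, adj11]
  rw [hq, hb, he, hh]
  nlinarith [key]

theorem entry_mul_diff {F G : (Fin 3 → ℝ) → Matrix (Fin 2) (Fin 2) ℝ} {x : Fin 3 → ℝ}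
    (hF : ∀ i j, DifferentiableAt ℝ (fun y => F y i j) x)
    (hG : ∀ i j, DifferentiableAt ℝ (fun y => G y i j) x) :
    ∀ i j, DifferentiableAt ℝ (fun y => (F y * G y) i j) x := by
  intro i j
  have h1 : (fun y => (F y * G y) i j) = fun y => F y i 0 * G y 0 j + F y i 1 * G y 1 j := by
    funext y; simp [Matrix.mul_apply, Fin.sum_univ_two]
  rw [h1]
  exact ((hF i 0).mul (hG 0 j)).add ((hF i 1).mul (hG 1 j))

theorem trace_mul_diff {F G : (Fin 3 → ℝ) → Matrix (Fin 2) (Fin 2) ℝ} {x : Fin 3 → ℝ}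
    (hF : ∀ i j, DifferentiableAt ℝ (fun y => F y i j) x)
    (hG : ∀ i j, DifferentiableAt ℝ (fun y => G y i j) x) :
    DifferentiableAt ℝ (fun y => (F y * G y).trace) x := by
  have h1 : (fun y => (F y * G y).trace)
      = fun y => (F y * G y) 0 0 + (F y * G y) 1 1 := by
    funext y; simp [Matrix.trace_fin_two]
  rw [h1]
  exact (entry_mul_diff hF hG 0 0).add (entry_mul_diff hF hG 1 1)

theorem adj_entry_diff {F : (Fin 3 → ℝ) → Matrix (Fin 2) (Fin 2) ℝ} {x : Fin 3 → ℝ}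
    (hF : ∀ i j, DifferentiableAt ℝ (fun y => F y i j) x) :
    ∀ i j, DifferentiableAt ℝ (fun y => (F y).adjugate i j) x := by
  intro i j
  fin_cases i <;> fin_cases j <;>
    simp only [Fin.zero_eta, Fin.mk_one, Fin.isValue, adj00, adj01, adj10, adj11] <;>
    first
      | exact hF _ _
      | exact (hF _ _).neg


/-- Mazur identity: if Φ, Φ̃ are C² maps on an open U ⊆ ℝ³ with values in
unimodular symmetric positive-definite 2×2 matrices, both satisfying the harmonic
map equation Σₖ ∂ₖ(Φ⁻¹∂ₖΦ) = 0, then Ψ = trace(Φ̃Φ⁻¹) is subharmonic on U. -/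
theorem stmt_19 (U : Set (Fin 3 → ℝ)) (hUopen : IsOpen U)
    (Φ Φt : (Fin 3 → ℝ) → Matrix (Fin 2) (Fin 2) ℝ)
    (hΦC2 : ∀ i j, ContDiffOn ℝ 2 (fun x => Φ x i j) U)
    (hΦtC2 : ∀ i j, ContDiffOn ℝ 2 (fun x => Φt x i j) U)
    (hΦsymm : ∀ x ∈ U, (Φ x)ᵀ = Φ x)
    (hΦtsymm : ∀ x ∈ U, (Φt x)ᵀ = Φt x)
    (hΦpd : ∀ x ∈ U, ∀ v : Fin 2 → ℝ, v ≠ 0 → 0 < v ⬝ᵥ (Φ x).mulVec v)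
    (hΦtpd : ∀ x ∈ U, ∀ v : Fin 2 → ℝ, v ≠ 0 → 0 < v ⬝ᵥ (Φt x).mulVec v)
    (hΦdet : ∀ x ∈ U, (Φ x).det = 1)
    (hΦtdet : ∀ x ∈ U, (Φt x).det = 1)
    (hΦharm : ∀ x ∈ U, ∑ k : Fin 3, mpd3 k (fun y => (Φ y)⁻¹ * mpd3 k Φ y) x = 0)
    (hΦtharm : ∀ x ∈ U, ∑ k : Fin 3, mpd3 k (fun y => (Φt y)⁻¹ * mpd3 k Φt y) x = 0) :
    ∀ x ∈ U,
      0 ≤ ∑ k : Fin 3, pd3 k (pd3 k (fun y => (Φt y * (Φ y)⁻¹).trace)) x := by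

  -- inverse = adjugate on U
  have hinv : ∀ y ∈ U, (Φ y)⁻¹ = (Φ y).adjugate := by
    intro y hy
    rw [Matrix.inv_def, hΦdet y hy, Ring.inverse_one, one_smul]
  -- differentiability of entries
  have hΦdiff : ∀ x' ∈ U, ∀ i j, DifferentiableAt ℝ (fun y => Φ y i j) x' := by
    intro x' hx' i j
    exact ((hΦC2 i j).differentiableOn (by norm_num)).differentiableAt (hUopen.mem_nhds hx')
  have hΦtdiff : ∀ x' ∈ U, ∀ i j, DifferentiableAt ℝ (fun y => Φt y i j) x' := by
    intro x' hx' i j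
    exact ((hΦtC2 i j).differentiableOn (by norm_num)).differentiableAt (hUopen.mem_nhds hx')
  -- differentiability of entries of first derivatives
  have hΦdiff1 : ∀ x' ∈ U, ∀ (k : Fin 3) i j,
      DifferentiableAt ℝ (fun y => mpd3 k Φ y i j) x' := by
    intro x' hx' k i j
    have h2 : ContDiffOn ℝ 1 (fderiv ℝ (fun y => Φ y i j)) U :=
      (hΦC2 i j).fderiv_of_isOpen hUopen (by norm_num)
    have h3 : DifferentiableAt ℝ (fderiv ℝ (fun y => Φ y i j)) x' :=
      (h2.differentiableOn one_ne_zero).differentiableAt (hUopen.mem_nhds hx')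
    exact h3.clm_apply (differentiableAt_const _)
  have hΦtdiff1 : ∀ x' ∈ U, ∀ (k : Fin 3) i j,
      DifferentiableAt ℝ (fun y => mpd3 k Φt y i j) x' := by
    intro x' hx' k i j
    have h2 : ContDiffOn ℝ 1 (fderiv ℝ (fun y => Φt y i j)) U :=
      (hΦtC2 i j).fderiv_of_isOpen hUopen (by norm_num)
    have h3 : DifferentiableAt ℝ (fderiv ℝ (fun y => Φt y i j)) x' :=
      (h2.differentiableOn one_ne_zero).differentiableAt (hUopen.mem_nhds hx')
    exact h3.clm_apply (differentiableAt_const _)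
  -- first derivative of Ψ on U
  have hD1 : ∀ x' ∈ U, ∀ k, pd3 k (fun y => (Φt y * (Φ y)⁻¹).trace) x'
      = ((mpd3 k Φt x') * (Φ x').adjugate).trace
        + (Φt x' * (mpd3 k Φ x').adjugate).trace := by
    intro x' hx' k
    have hev : (fun y => (Φt y * (Φ y)⁻¹).trace)
        =ᶠ[nhds x'] (fun y => (Φt y * (Φ y).adjugate).trace) := by
      filter_upwards [hUopen.mem_nhds hx'] with y hy
      rw [hinv y hy]
    rw [pd3_congr hev k,
      pd3_trace (entry_mul_diff (hΦtdiff x' hx') (adj_entry_diff (hΦdiff x' hx'))) k,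
      mpd3_mul (hΦtdiff x' hx') (adj_entry_diff (hΦdiff x' hx')) k,
      mpd3_adjugate k, Matrix.trace_add]
  intro x hx
  -- second derivative of Ψ at x
  have hD2 : ∀ k, pd3 k (pd3 k (fun y => (Φt y * (Φ y)⁻¹).trace)) x
      = ((mpd3 k (fun y => mpd3 k Φt y) x) * (Φ x).adjugate).trace
        + (mpd3 k Φt x * (mpd3 k Φ x).adjugate).trace
        + ((mpd3 k Φt x * (mpd3 k Φ x).adjugate).trace
          + (Φt x * (mpd3 k (fun y => mpd3 k Φ y) x).adjugate).trace) := by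
    intro k
    have hev : (pd3 k (fun y => (Φt y * (Φ y)⁻¹).trace))
        =ᶠ[nhds x] (fun y => (mpd3 k Φt y * (Φ y).adjugate).trace
          + (Φt y * (mpd3 k Φ y).adjugate).trace) := by
      filter_upwards [hUopen.mem_nhds hx] with y hy
      exact hD1 y hy k
    rw [pd3_congr hev k,
      pd3_add (trace_mul_diff (hΦtdiff1 x hx k) (adj_entry_diff (hΦdiff x hx)))
        (trace_mul_diff (hΦtdiff x hx) (adj_entry_diff (hΦdiff1 x hx k))) k,
      pd3_trace (entry_mul_diff (hΦtdiff1 x hx k) (adj_entry_diff (hΦdiff x hx))) k,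
      pd3_trace (entry_mul_diff (hΦtdiff x hx) (adj_entry_diff (hΦdiff1 x hx k))) k,
      mpd3_mul (hΦtdiff1 x hx k) (adj_entry_diff (hΦdiff x hx)) k,
      mpd3_mul (hΦtdiff x hx) (adj_entry_diff (hΦdiff1 x hx k)) k,
      mpd3_adjugate k, mpd3_adjugate k, Matrix.trace_add, Matrix.trace_add]
  -- harmonic equations at x
  have hkΦ : ∀ k : Fin 3, mpd3 k (fun y => (Φ y)⁻¹ * mpd3 k Φ y) x
      = (mpd3 k Φ x).adjugate * mpd3 k Φ x
        + (Φ x).adjugate * mpd3 k (fun y => mpd3 k Φ y) x := by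
    intro k
    have hev : (fun y => (Φ y)⁻¹ * mpd3 k Φ y)
        =ᶠ[nhds x] (fun y => (Φ y).adjugate * mpd3 k Φ y) := by
      filter_upwards [hUopen.mem_nhds hx] with y hy
      rw [hinv y hy]
    rw [mpd3_congr hev k,
      mpd3_mul (adj_entry_diff (hΦdiff x hx)) (hΦdiff1 x hx k) k, mpd3_adjugate k]
  have hkΦt : ∀ k : Fin 3, mpd3 k (fun y => (Φt y)⁻¹ * mpd3 k Φt y) x
      = (mpd3 k Φt x).adjugate * mpd3 k Φt x
        + (Φt x).adjugate * mpd3 k (fun y => mpd3 k Φt y) x := by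
    intro k
    have hinvt : ∀ y ∈ U, (Φt y)⁻¹ = (Φt y).adjugate := by
      intro y hy
      rw [Matrix.inv_def, hΦtdet y hy, Ring.inverse_one, one_smul]
    have hev : (fun y => (Φt y)⁻¹ * mpd3 k Φt y)
        =ᶠ[nhds x] (fun y => (Φt y).adjugate * mpd3 k Φt y) := by
      filter_upwards [hUopen.mem_nhds hx] with y hy
      rw [hinvt y hy]
    rw [mpd3_congr hev k,
      mpd3_mul (adj_entry_diff (hΦtdiff x hx)) (hΦtdiff1 x hx k) k, mpd3_adjugate k]
  have hharm : ((mpd3 0 Φ x).adjugate * mpd3 0 Φ x + (mpd3 1 Φ x).adjugate * mpd3 1 Φ x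
        + (mpd3 2 Φ x).adjugate * mpd3 2 Φ x)
      + (Φ x).adjugate * (mpd3 0 (fun y => mpd3 0 Φ y) x + mpd3 1 (fun y => mpd3 1 Φ y) x
        + mpd3 2 (fun y => mpd3 2 Φ y) x) = 0 := by
    have h := hΦharm x hx
    rw [Fin.sum_univ_three, hkΦ 0, hkΦ 1, hkΦ 2] at h
    rw [mul_add, mul_add]
    conv_rhs => rw [← h]
    abel
  have hharmt : ((mpd3 0 Φt x).adjugate * mpd3 0 Φt x + (mpd3 1 Φt x).adjugate * mpd3 1 Φt x
        + (mpd3 2 Φt x).adjugate * mpd3 2 Φt x)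
      + (Φt x).adjugate * (mpd3 0 (fun y => mpd3 0 Φt y) x + mpd3 1 (fun y => mpd3 1 Φt y) x
        + mpd3 2 (fun y => mpd3 2 Φt y) x) = 0 := by
    have h := hΦtharm x hx
    rw [Fin.sum_univ_three, hkΦt 0, hkΦt 1, hkΦt 2] at h
    rw [mul_add, mul_add]
    conv_rhs => rw [← h]
    abel
  -- solve for sum of second derivatives
  have hPQ : Φ x * (Φ x).adjugate = 1 := by
    rw [Matrix.mul_adjugate, hΦdet x hx, one_smul]
  have hPtQt : Φt x * (Φt x).adjugate = 1 := by
    rw [Matrix.mul_adjugate, hΦtdet x hx, one_smul]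
  have hSE : mpd3 0 (fun y => mpd3 0 Φ y) x + mpd3 1 (fun y => mpd3 1 Φ y) x
      + mpd3 2 (fun y => mpd3 2 Φ y) x
      = -(Φ x * ((mpd3 0 Φ x).adjugate * mpd3 0 Φ x + (mpd3 1 Φ x).adjugate * mpd3 1 Φ x
        + (mpd3 2 Φ x).adjugate * mpd3 2 Φ x)) := by
    have h7 := eq_neg_of_add_eq_zero_right hharm
    calc mpd3 0 (fun y => mpd3 0 Φ y) x + mpd3 1 (fun y => mpd3 1 Φ y) x
        + mpd3 2 (fun y => mpd3 2 Φ y) x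
        = Φ x * ((Φ x).adjugate * (mpd3 0 (fun y => mpd3 0 Φ y) x
          + mpd3 1 (fun y => mpd3 1 Φ y) x + mpd3 2 (fun y => mpd3 2 Φ y) x)) := by
          rw [← Matrix.mul_assoc, hPQ, Matrix.one_mul]
      _ = -(Φ x * ((mpd3 0 Φ x).adjugate * mpd3 0 Φ x + (mpd3 1 Φ x).adjugate * mpd3 1 Φ x
          + (mpd3 2 Φ x).adjugate * mpd3 2 Φ x)) := by rw [h7, Matrix.mul_neg]
  have hSEt : mpd3 0 (fun y => mpd3 0 Φt y) x + mpd3 1 (fun y => mpd3 1 Φt y) x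
      + mpd3 2 (fun y => mpd3 2 Φt y) x
      = -(Φt x * ((mpd3 0 Φt x).adjugate * mpd3 0 Φt x + (mpd3 1 Φt x).adjugate * mpd3 1 Φt x
        + (mpd3 2 Φt x).adjugate * mpd3 2 Φt x)) := by
    have h7 := eq_neg_of_add_eq_zero_right hharmt
    calc mpd3 0 (fun y => mpd3 0 Φt y) x + mpd3 1 (fun y => mpd3 1 Φt y) x
        + mpd3 2 (fun y => mpd3 2 Φt y) x
        = Φt x * ((Φt x).adjugate * (mpd3 0 (fun y => mpd3 0 Φt y) x
          + mpd3 1 (fun y => mpd3 1 Φt y) x + mpd3 2 (fun y => mpd3 2 Φt y) x)) := by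
          rw [← Matrix.mul_assoc, hPtQt, Matrix.one_mul]
      _ = -(Φt x * ((mpd3 0 Φt x).adjugate * mpd3 0 Φt x + (mpd3 1 Φt x).adjugate * mpd3 1 Φt x
          + (mpd3 2 Φt x).adjugate * mpd3 2 Φt x)) := by rw [h7, Matrix.mul_neg]
  -- part A : second-derivative Φt terms
  have hA : ((mpd3 0 (fun y => mpd3 0 Φt y) x) * (Φ x).adjugate).trace
      + ((mpd3 1 (fun y => mpd3 1 Φt y) x) * (Φ x).adjugate).trace
      + ((mpd3 2 (fun y => mpd3 2 Φt y) x) * (Φ x).adjugate).trace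
      = -((Φt x * ((mpd3 0 Φt x).adjugate * mpd3 0 Φt x) * (Φ x).adjugate).trace
        + (Φt x * ((mpd3 1 Φt x).adjugate * mpd3 1 Φt x) * (Φ x).adjugate).trace
        + (Φt x * ((mpd3 2 Φt x).adjugate * mpd3 2 Φt x) * (Φ x).adjugate).trace) := by
    rw [show ∀ A B C Q : Matrix (Fin 2) (Fin 2) ℝ, (A*Q).trace + (B*Q).trace + (C*Q).trace
        = ((A + B + C)*Q).trace from fun A B C Q => by
      rw [Matrix.add_mul, Matrix.add_mul, Matrix.trace_add, Matrix.trace_add]]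
    rw [hSEt, Matrix.neg_mul, Matrix.trace_neg, Matrix.mul_add, Matrix.mul_add,
      Matrix.add_mul, Matrix.add_mul, Matrix.trace_add, Matrix.trace_add]
  -- part C : second-derivative Φ terms
  have hC : (Φt x * (mpd3 0 (fun y => mpd3 0 Φ y) x).adjugate).trace
      + (Φt x * (mpd3 1 (fun y => mpd3 1 Φ y) x).adjugate).trace
      + (Φt x * (mpd3 2 (fun y => mpd3 2 Φ y) x).adjugate).trace
      = -((Φt x * ((mpd3 0 Φ x).adjugate * mpd3 0 Φ x).adjugate * (Φ x).adjugate).trace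
        + (Φt x * ((mpd3 1 Φ x).adjugate * mpd3 1 Φ x).adjugate * (Φ x).adjugate).trace
        + (Φt x * ((mpd3 2 Φ x).adjugate * mpd3 2 Φ x).adjugate * (Φ x).adjugate).trace) := by
    rw [show ∀ A B C Pt : Matrix (Fin 2) (Fin 2) ℝ, (Pt*A.adjugate).trace + (Pt*B.adjugate).trace
        + (Pt*C.adjugate).trace = (Pt*((A + B + C).adjugate)).trace from fun A B C Pt => by
      rw [adjugate_add', adjugate_add', Matrix.mul_add, Matrix.mul_add,
        Matrix.trace_add, Matrix.trace_add]]
    rw [hSE, adjugate_neg', Matrix.adjugate_mul_distrib, adjugate_add', adjugate_add',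
      Matrix.mul_neg, Matrix.trace_neg, Matrix.add_mul, Matrix.add_mul,
      Matrix.mul_add, Matrix.mul_add, Matrix.trace_add, Matrix.trace_add,
      Matrix.mul_assoc, Matrix.mul_assoc, Matrix.mul_assoc]
  -- symmetry of derivatives
  have hsymmD : ∀ k : Fin 3, (mpd3 k Φ x)ᵀ = mpd3 k Φ x := by
    intro k
    ext i j
    simp only [Matrix.transpose_apply, mpd3_apply]
    refine pd3_congr ?_ k
    filter_upwards [hUopen.mem_nhds hx] with y hy
    have := congrFun (congrFun (hΦsymm y hy) i) j
    simpa [Matrix.transpose_apply] using this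
  have hsymmDt : ∀ k : Fin 3, (mpd3 k Φt x)ᵀ = mpd3 k Φt x := by
    intro k
    ext i j
    simp only [Matrix.transpose_apply, mpd3_apply]
    refine pd3_congr ?_ k
    filter_upwards [hUopen.mem_nhds hx] with y hy
    have := congrFun (congrFun (hΦtsymm y hy) i) j
    simpa [Matrix.transpose_apply] using this
  -- positivity of corner entries
  have hp0 : 0 < Φ x 0 0 := by
    have h := hΦpd x hx ![1,0] (by
      intro hcon
      have := congrFun hcon 0
      norm_num at this)
    simpa [Matrix.mulVec, dotProduct, Fin.sum_univ_two] using h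
  have hpt0 : 0 < Φt x 0 0 := by
    have h := hΦtpd x hx ![1,0] (by
      intro hcon
      have := congrFun hcon 0
      norm_num at this)
    simpa [Matrix.mulVec, dotProduct, Fin.sum_univ_two] using h
  -- trace constraints from det = 1
  have hdet0 : ∀ k : Fin 3, ((Φ x).adjugate * mpd3 k Φ x).trace = 0 := by
    intro k
    have h0 : pd3 k (fun y => (Φ y).det) x = 0 := by
      have hev : (fun y => (Φ y).det) =ᶠ[nhds x] (fun _ => (1:ℝ)) := by
        filter_upwards [hUopen.mem_nhds hx] with y hy
        exact hΦdet y hy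
      rw [pd3_congr hev k]
      simp [pd3]
    have h1 : (fun y => (Φ y).det)
        = fun y => Φ y 0 0 * Φ y 1 1 - Φ y 0 1 * Φ y 1 0 := by
      funext y; rw [Matrix.det_fin_two]
    rw [h1, pd3_sub ((hΦdiff x hx 0 0).fun_mul (hΦdiff x hx 1 1))
        ((hΦdiff x hx 0 1).fun_mul (hΦdiff x hx 1 0)) k,
      pd3_mul (hΦdiff x hx 0 0) (hΦdiff x hx 1 1) k,
      pd3_mul (hΦdiff x hx 0 1) (hΦdiff x hx 1 0) k] at h0
    simp only [← mpd3_apply] at h0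
    simp only [Matrix.trace_fin_two, Matrix.mul_apply, Fin.sum_univ_two,
      adj00, adj01, adj10, adj11]
    linear_combination h0
  have hdet0t : ∀ k : Fin 3, ((Φt x).adjugate * mpd3 k Φt x).trace = 0 := by
    intro k
    have h0 : pd3 k (fun y => (Φt y).det) x = 0 := by
      have hev : (fun y => (Φt y).det) =ᶠ[nhds x] (fun _ => (1:ℝ)) := by
        filter_upwards [hUopen.mem_nhds hx] with y hy
        exact hΦtdet y hy
      rw [pd3_congr hev k]
      simp [pd3]
    have h1 : (fun y => (Φt y).det)
        = fun y => Φt y 0 0 * Φt y 1 1 - Φt y 0 1 * Φt y 1 0 := by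
      funext y; rw [Matrix.det_fin_two]
    rw [h1, pd3_sub ((hΦtdiff x hx 0 0).fun_mul (hΦtdiff x hx 1 1))
        ((hΦtdiff x hx 0 1).fun_mul (hΦtdiff x hx 1 0)) k,
      pd3_mul (hΦtdiff x hx 0 0) (hΦtdiff x hx 1 1) k,
      pd3_mul (hΦtdiff x hx 0 1) (hΦtdiff x hx 1 0) k] at h0
    simp only [← mpd3_apply] at h0
    simp only [Matrix.trace_fin_two, Matrix.mul_apply, Fin.sum_univ_two,
      adj00, adj01, adj10, adj11]
    linear_combination h0
  -- key inequality for each k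
  have hBk : ∀ k : Fin 3,
      0 ≤ -(Φt x * ((mpd3 k Φt x).adjugate * mpd3 k Φt x) * (Φ x).adjugate).trace
        + 2*(mpd3 k Φt x * (mpd3 k Φ x).adjugate).trace
        - (Φt x * ((mpd3 k Φ x).adjugate * mpd3 k Φ x).adjugate * (Φ x).adjugate).trace :=
    fun k => mazur_key (Φ x) (Φt x) (mpd3 k Φ x) (mpd3 k Φt x)
      (hΦsymm x hx) (hΦtsymm x hx) (hsymmD k) (hsymmDt k)
      hp0 hpt0 (hΦdet x hx) (hΦtdet x hx) (hdet0 k) (hdet0t k)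
  rw [Fin.sum_univ_three, hD2 0, hD2 1, hD2 2]
  linarith [hA, hC, hBk 0, hBk 1, hBk 2]
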